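/- Let H : ℝ → ℝ^{N×N} be a differentiable family of real symmetric matrices, and suppose λ : ℝ → ℝ and u : ℝ → ℝ^N are differentiable functions such that H(x)·u(x) = λ(x)·u(x) and ‖u(x)‖ = 1 for all x in an open interval. Then for every x in that interval, λ'(x) = u(x)ᵀ·H'(x)·u(x), where H'(x) is the entrywise derivative of H at x. -/

import Mathlib

open Matrix

/-- Derivative of an eigenvalue of a differentiable family of real symmetric matrices
(Magnus): if `H(x) u(x) = λ(x) u(x)` with `‖u(x)‖ = 1` on an open interval, with `H`,
`λ`, `u` differentiable, then `λ'(x) = u(x)ᵀ H'(x) u(x)` on that interval. -/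
theorem eigenvalue_derivative_formula
    {N : ℕ} (H H' : ℝ → Matrix (Fin N) (Fin N) ℝ)
    (lam lam' : ℝ → ℝ) (u u' : ℝ → Fin N → ℝ)
    (a b : ℝ) (hab : a < b)
    (hsymm : ∀ x ∈ Set.Ioo a b, (H x).IsSymm)
    (hH : ∀ x ∈ Set.Ioo a b, ∀ i j, HasDerivAt (fun t => H t i j) (H' x i j) x)
    (hlam : ∀ x ∈ Set.Ioo a b, HasDerivAt lam (lam' x) x)
    (hu : ∀ x ∈ Set.Ioo a b, ∀ i, HasDerivAt (fun t => u t i) (u' x i) x)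
    (heig : ∀ x ∈ Set.Ioo a b, H x *ᵥ u x = lam x • u x)
    (hnorm : ∀ x ∈ Set.Ioo a b, ∑ i, (u x i) ^ 2 = 1) :
    ∀ x ∈ Set.Ioo a b, lam' x = u x ⬝ᵥ (H' x *ᵥ u x) := by
  intro x hx
  have hmem : Set.Ioo a b ∈ nhds x := (isOpen_Ioo).mem_nhds hx
  -- Step 1: u x ⬝ᵥ u' x = 0
  have hnorm' : HasDerivAt (fun t => ∑ i, (u t i) ^ 2)
      (∑ i, 2 * u x i * u' x i) x := by
    apply HasDerivAt.fun_sum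
    intro i _
    have := ((hu x hx i).fun_mul (hu x hx i))
    convert this using 1
    · rfl
    · ext t; ring
    · ring
  have hconst : HasDerivAt (fun t => ∑ i, (u t i) ^ 2) 0 x := by
    have : (fun t => ∑ i, (u t i) ^ 2) =ᶠ[nhds x] (fun _ => (1:ℝ)) := by
      filter_upwards [hmem] with t ht using hnorm t ht
    exact (hasDerivAt_const x (1:ℝ)).congr_of_eventuallyEq this
  have horth : ∑ i, u x i * u' x i = 0 := by
    have h0 : ∑ i, 2 * u x i * u' x i = 0 := hnorm'.unique hconst
    have : (2:ℝ) * ∑ i, u x i * u' x i = 0 := by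
      rw [Finset.mul_sum]; rw [← h0]; congr 1; ext i; ring
    linarith
  -- Step 2: derivative of quadratic form
  set D : ℝ := ∑ i, ∑ j, (u' x i * H x i j * u x j + u x i * H' x i j * u x j
      + u x i * H x i j * u' x j) with hD
  have hquad : HasDerivAt (fun t => ∑ i, ∑ j, u t i * H t i j * u t j) D x := by
    rw [hD]
    apply HasDerivAt.fun_sum; intro i _
    apply HasDerivAt.fun_sum; intro j _
    have := (((hu x hx i).fun_mul (hH x hx i j)).fun_mul (hu x hx j))
    convert this using 1
    · rfl
    ring
  -- Step 3: quadratic form equals lam on Ioo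
  have heq : (fun t => ∑ i, ∑ j, u t i * H t i j * u t j) =ᶠ[nhds x] lam := by
    filter_upwards [hmem] with t ht
    have h1 : ∑ i, ∑ j, u t i * H t i j * u t j = u t ⬝ᵥ (H t *ᵥ u t) := by
      simp [dotProduct, mulVec, Finset.mul_sum, mul_assoc]
    rw [h1, heig t ht, dotProduct_smul, smul_eq_mul]
    have : u t ⬝ᵥ u t = 1 := by
      simpa [dotProduct, sq] using hnorm t ht
    rw [this, mul_one]
  have hlamD : HasDerivAt lam D x := hquad.congr_of_eventuallyEq heq.symm
  have hD' : lam' x = D := (hlam x hx).unique hlamD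
  -- Step 4: compute D
  have hs : ∀ i j, H x j i = H x i j := by
    intro i j
    have := (hsymm x hx)
    rw [Matrix.IsSymm] at this
    exact congrFun (congrFun this j) i |>.symm ▸ by
      have h2 := congrFun (congrFun this i) j
      simpa [Matrix.transpose_apply] using h2
  have hA : ∑ i, ∑ j, u' x i * H x i j * u x j = 0 := by
    have : ∑ i, ∑ j, u' x i * H x i j * u x j = u' x ⬝ᵥ (H x *ᵥ u x) := by
      simp [dotProduct, mulVec, Finset.mul_sum, mul_assoc]
    rw [this, heig x hx, dotProduct_smul, smul_eq_mul]
    have : u' x ⬝ᵥ u x = 0 := by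
      simpa [dotProduct, mul_comm] using horth
    rw [this, mul_zero]
  have hC : ∑ i, ∑ j, u x i * H x i j * u' x j = 0 := by
    have h1 : ∑ i, ∑ j, u x i * H x i j * u' x j
        = ∑ j, ∑ i, u' x j * H x j i * u x i := by
      rw [Finset.sum_comm]
      apply Finset.sum_congr rfl; intro j _
      apply Finset.sum_congr rfl; intro i _
      rw [hs j i]; ring
    rw [h1]
    have : ∑ j, ∑ i, u' x j * H x j i * u x i = u' x ⬝ᵥ (H x *ᵥ u x) := by
      simp [dotProduct, mulVec, Finset.mul_sum, mul_assoc]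
    rw [this, heig x hx, dotProduct_smul, smul_eq_mul]
    have : u' x ⬝ᵥ u x = 0 := by
      simpa [dotProduct, mul_comm] using horth
    rw [this, mul_zero]
  have hB : ∑ i, ∑ j, u x i * H' x i j * u x j = u x ⬝ᵥ (H' x *ᵥ u x) := by
    simp [dotProduct, mulVec, Finset.mul_sum, mul_assoc]
  rw [hD', hD]
  have : ∑ i, ∑ j, (u' x i * H x i j * u x j + u x i * H' x i j * u x j
      + u x i * H x i j * u' x j)
      = (∑ i, ∑ j, u' x i * H x i j * u x j)
      + (∑ i, ∑ j, u x i * H' x i j * u x j)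
      + (∑ i, ∑ j, u x i * H x i j * u' x j) := by
    simp [Finset.sum_add_distrib]
  rw [this, hA, hC, hB, zero_add, add_zero]
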